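/- Let (P, C) be a WI-poset. In the extended box poset B_ex(P) ⊆ (P ∪ {0̂}) × (P ∪ {0̂}), for each p ∈ P the fiber D = {(x, y) ∈ B(P) | (x, y) ≥ (p, 0̂)} (i.e., x ≥ p, x ≤ C y, y ≤ C x) deformation retracts onto the subposet E = {(p, y) | y ≤ C p ∧ p ≤ C y}, and E has maximum element (p, C p); hence D is contractible. -/

import Mathlib

def orderComplexRealization (P : Type*) [Preorder P] : Type _ :=
  {f : P → ℝ // (∀ p, 0 ≤ f p) ∧ (Function.support f).Finite ∧
      IsChain (· ≤ ·) (Function.support f) ∧ ∑ᶠ p, f p = 1}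

instance (P : Type*) [Preorder P] : TopologicalSpace (orderComplexRealization P) :=
  instTopologicalSpaceSubtype

open scoped Classical

namespace OCH

variable {X : Type*} [PartialOrder X] [Fintype X]

noncomputable def cum (f : X → ℝ) (d : X) : ℝ :=
  ∑ d' ∈ Finset.univ.filter (· ≤ d), f d'

noncomputable def Acoef (t : ℝ) (f : X → ℝ) (d : X) : ℝ :=
  min (cum f d) (1 - t) - min (cum f d - f d) (1 - t)

noncomputable def Hfun (φ ψ : X → X) (t : ℝ) (f : X → ℝ) (q : X) : ℝ :=
  ∑ d, ((if φ d = q then Acoef t f d else 0) + (if ψ d = q then f d - Acoef t f d else 0))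

section lemmas

variable {f : X → ℝ} (hf0 : ∀ q, 0 ≤ f q) (hfs : ∑ q, f q = 1)

include hf0 in
lemma cum_sub_nonneg (d : X) : 0 ≤ cum f d - f d := by
  have hd : d ∈ Finset.univ.filter (· ≤ d) := by simp
  have := Finset.single_le_sum (f := f) (fun i _ => hf0 i) hd
  simpa [cum] using by linarith [this]

include hf0 hfs in
lemma cum_le_one (d : X) : cum f d ≤ 1 := by
  rw [← hfs]
  exact Finset.sum_le_sum_of_subset_of_nonneg (Finset.filter_subset _ _)
    (fun i _ _ => hf0 i)

include hf0 in
lemma cum_lt (d' d : X) (h : d' < d) : cum f d' + f d ≤ cum f d := by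
  have hsub : insert d (Finset.univ.filter (· ≤ d')) ⊆ Finset.univ.filter (· ≤ d) := by
    intro x hx
    simp only [Finset.mem_insert, Finset.mem_filter, Finset.mem_univ, true_and] at hx ⊢
    rcases hx with rfl | hx
    · exact le_refl x
    · exact hx.trans h.le
  have hd : d ∉ Finset.univ.filter (· ≤ d') := by
    simp only [Finset.mem_filter, Finset.mem_univ, true_and]
    exact fun hdd => absurd (lt_of_le_of_lt hdd h) (lt_irrefl d)
  have := Finset.sum_le_sum_of_subset_of_nonneg hsub (fun i _ _ => hf0 i)
  rw [Finset.sum_insert hd] at this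
  simp only [cum]
  linarith

include hf0 in
lemma Acoef_nonneg (t : ℝ) (d : X) : 0 ≤ Acoef t f d := by
  have : cum f d - f d ≤ cum f d := by linarith [hf0 d]
  exact sub_nonneg.mpr (min_le_min this le_rfl)

include hf0 in
lemma cum_nonneg (d : X) : 0 ≤ cum f d :=
  Finset.sum_nonneg fun i _ => hf0 i

include hf0 in
lemma Acoef_le (t : ℝ) (d : X) : Acoef t f d ≤ f d := by
  unfold Acoef
  rcases le_total (1 - t) (cum f d - f d) with h | h
  · rw [min_eq_right h, min_eq_right (by linarith [hf0 d] : (1:ℝ) - t ≤ cum f d)]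
    linarith [hf0 d]
  · rw [min_eq_left h]
    have : min (cum f d) (1 - t) ≤ cum f d := min_le_left _ _
    linarith

include hf0 hfs in
lemma Acoef_zero (d : X) : Acoef 0 f d = f d := by
  unfold Acoef
  rw [min_eq_left (by simpa using cum_le_one hf0 hfs d),
    min_eq_left (by linarith [cum_le_one hf0 hfs d, hf0 d])]
  ring

include hf0 in
lemma Acoef_one (d : X) : Acoef 1 f d = 0 := by
  unfold Acoef
  rw [show (1:ℝ) - 1 = 0 by ring, min_eq_right (cum_nonneg hf0 d),
    min_eq_right (cum_sub_nonneg hf0 d)]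
  ring

include hf0 in
lemma Acoef_ne_zero {t : ℝ} {d : X} (h : Acoef t f d ≠ 0) :
    f d ≠ 0 ∧ cum f d - f d < 1 - t := by
  constructor
  · intro hfd
    exact h (by simp [Acoef, hfd])
  · by_contra hle
    push_neg at hle
    apply h
    unfold Acoef
    rw [min_eq_right hle, min_eq_right (by linarith [hf0 d])]
    ring

include hf0 in
lemma Bcoef_ne_zero {t : ℝ} {d : X} (h : f d - Acoef t f d ≠ 0) :
    f d ≠ 0 ∧ 1 - t < cum f d := by
  constructor
  · intro hfd
    exact h (by simp [Acoef, hfd])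
  · by_contra hle
    push_neg at hle
    apply h
    unfold Acoef
    rw [min_eq_left hle, min_eq_left (by linarith [hf0 d])]
    ring

end lemmas

section main

variable (φ ψ : X → X)

-- membership of Hfun in the order complex
lemma Hfun_mem (hφ : Monotone φ) (hψ : Monotone ψ) (hle : ∀ d, φ d ≤ ψ d) (t : ℝ) (ht0 : 0 ≤ t) (ht1 : t ≤ 1) (f : orderComplexRealization X) :
    (∀ q, 0 ≤ Hfun φ ψ t f.1 q) ∧ (Function.support (Hfun φ ψ t f.1)).Finite ∧
      IsChain (· ≤ ·) (Function.support (Hfun φ ψ t f.1)) ∧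
      ∑ᶠ q, Hfun φ ψ t f.1 q = 1 := by
  obtain ⟨hf0, -, hfc, hfs⟩ := f.2
  have hfs' : ∑ q, f.1 q = 1 := by rw [← finsum_eq_sum_of_fintype]; exact hfs
  have hterm : ∀ d q, 0 ≤ (if φ d = q then Acoef t f.1 d else 0) +
      (if ψ d = q then f.1 d - Acoef t f.1 d else 0) := by
    intro d q
    have h1 : (0:ℝ) ≤ if φ d = q then Acoef t f.1 d else 0 := by
      split
      · exact Acoef_nonneg hf0 t d
      · exact le_refl 0
    have h2 : (0:ℝ) ≤ if ψ d = q then f.1 d - Acoef t f.1 d else 0 := by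
      split
      · exact sub_nonneg.mpr (Acoef_le hf0 t d)
      · exact le_refl 0
    linarith
  refine ⟨fun q => Finset.sum_nonneg fun d _ => hterm d q, Set.toFinite _, ?_, ?_⟩
  · -- chain
    intro q₁ hq₁ q₂ hq₂ hne
    simp only [Function.mem_support] at hq₁ hq₂
    obtain ⟨d₁, -, hd₁⟩ := Finset.exists_ne_zero_of_sum_ne_zero hq₁
    obtain ⟨d₂, -, hd₂⟩ := Finset.exists_ne_zero_of_sum_ne_zero hq₂
    have split : ∀ (d : X) (q : X),
        (if φ d = q then Acoef t f.1 d else 0) +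
          (if ψ d = q then f.1 d - Acoef t f.1 d else 0) ≠ 0 →
        (φ d = q ∧ Acoef t f.1 d ≠ 0) ∨ (ψ d = q ∧ f.1 d - Acoef t f.1 d ≠ 0) := by
      intro d q h
      by_cases h1 : (if φ d = q then Acoef t f.1 d else 0) = 0
      · rw [h1, zero_add] at h
        split at h
        · right; exact ⟨by assumption, h⟩
        · exact absurd rfl h
      · split at h1
        · left; exact ⟨by assumption, fun hh => h1 (by simpa [hh])⟩
        · exact absurd rfl h1
    -- facts: witnesses and comparability
    have key : ∀ (d d' : X), (φ d = q₁ ∧ Acoef t f.1 d ≠ 0) ∨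
        (ψ d = q₁ ∧ f.1 d - Acoef t f.1 d ≠ 0) →
        (φ d' = q₂ ∧ Acoef t f.1 d' ≠ 0) ∨
        (ψ d' = q₂ ∧ f.1 d' - Acoef t f.1 d' ≠ 0) → q₁ ≤ q₂ ∨ q₂ ≤ q₁ := by
      intro d d' h1 h2
      have hfd : f.1 d ≠ 0 := by
        rcases h1 with ⟨-, h⟩ | ⟨-, h⟩
        · exact (Acoef_ne_zero hf0 h).1
        · exact (Bcoef_ne_zero hf0 h).1
      have hfd' : f.1 d' ≠ 0 := by
        rcases h2 with ⟨-, h⟩ | ⟨-, h⟩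
        · exact (Acoef_ne_zero hf0 h).1
        · exact (Bcoef_ne_zero hf0 h).1
      have hcomp : d ≤ d' ∨ d' ≤ d := by
        rcases eq_or_ne d d' with rfl | hdd
        · exact Or.inl le_rfl
        · exact (hfc hfd hfd' hdd).imp id id
      rcases h1 with ⟨hq1, hA1⟩ | ⟨hq1, hB1⟩ <;> rcases h2 with ⟨hq2, hA2⟩ | ⟨hq2, hB2⟩
      · -- φ, φ
        subst hq1; subst hq2
        exact hcomp.imp (fun h => hφ h) (fun h => hφ h)
      · -- φ d = q₁ (A≠0), ψ d' = q₂ (B≠0)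
        subst hq1; subst hq2
        rcases hcomp with h | h
        · exact Or.inl ((hφ h).trans (hle d'))
        · rcases eq_or_lt_of_le h with hEq | hlt
          · subst hEq; exact Or.inl (hle _)
          · exfalso
            have h1 := (Acoef_ne_zero hf0 hA1).2
            have h2 := (Bcoef_ne_zero hf0 hB2).2
            have := cum_lt hf0 d' d hlt
            linarith
      · -- ψ d = q₁ (B≠0), φ d' = q₂ (A≠0)
        subst hq1; subst hq2
        rcases hcomp with h | h
        · rcases eq_or_lt_of_le h with hEq | hlt
          · subst hEq; exact Or.inr (hle _)
          · exfalso
            have h1 := (Bcoef_ne_zero hf0 hB1).2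
            have h2 := (Acoef_ne_zero hf0 hA2).2
            have := cum_lt hf0 d d' hlt
            linarith
        · exact Or.inr ((hφ h).trans (hle d))
      · -- ψ, ψ
        subst hq1; subst hq2
        exact hcomp.imp (fun h => hψ h) (fun h => hψ h)
    exact key d₁ d₂ (split d₁ q₁ hd₁) (split d₂ q₂ hd₂)
  · -- sum = 1
    rw [finsum_eq_sum_of_fintype]
    unfold Hfun
    rw [Finset.sum_comm]
    have : ∀ d : X, ∑ q, ((if φ d = q then Acoef t f.1 d else 0) +
        (if ψ d = q then f.1 d - Acoef t f.1 d else 0)) = f.1 d := by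
      intro d
      rw [Finset.sum_add_distrib, Finset.sum_ite_eq, Finset.sum_ite_eq]
      simp
    rw [Finset.sum_congr rfl fun d _ => this d, hfs']

lemma Hfun_zero (f : orderComplexRealization X) :
    Hfun φ ψ 0 f.1 = fun q => ∑ d, if φ d = q then f.1 d else 0 := by
  obtain ⟨hf0, -, -, hfs⟩ := f.2
  have hfs' : ∑ q, f.1 q = 1 := by rw [← finsum_eq_sum_of_fintype]; exact hfs
  funext q
  unfold Hfun
  refine Finset.sum_congr rfl fun d _ => ?_
  rw [Acoef_zero hf0 hfs' d]
  simp

lemma Hfun_one (f : orderComplexRealization X) :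
    Hfun φ ψ 1 f.1 = fun q => ∑ d, if ψ d = q then f.1 d else 0 := by
  obtain ⟨hf0, -, -, -⟩ := f.2
  funext q
  unfold Hfun
  refine Finset.sum_congr rfl fun d _ => ?_
  rw [Acoef_one hf0 d]
  simp

lemma pf_cont : Continuous fun f : orderComplexRealization X =>
    (fun q => ∑ d, if φ d = q then f.1 d else 0 : X → ℝ) := by
  apply continuous_pi
  intro q
  apply continuous_finset_sum
  intro d _
  by_cases h : φ d = q
  · simpa [h] using (show Continuous fun a : orderComplexRealization X => a.1 d from
      (continuous_apply d).comp continuous_subtype_val)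
  · simpa [h] using (continuous_const : Continuous fun _ : orderComplexRealization X => (0:ℝ))

lemma pf_mem (f : orderComplexRealization X) (hφ : Monotone φ) :
    (∀ q, 0 ≤ ∑ d, if φ d = q then f.1 d else 0) ∧
    (Function.support (fun q => ∑ d, if φ d = q then f.1 d else 0)).Finite ∧
    IsChain (· ≤ ·) (Function.support (fun q => ∑ d, if φ d = q then f.1 d else 0)) ∧
    ∑ᶠ q, (∑ d, if φ d = q then f.1 d else 0) = 1 := by
  have h := Hfun_mem φ φ hφ hφ (fun _ => le_rfl) 0 le_rfl zero_le_one f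
  rwa [Hfun_zero φ φ f] at h


noncomputable def pf (hφ : Monotone φ) :
    C(orderComplexRealization X, orderComplexRealization X) :=
  ⟨fun f => ⟨fun q => ∑ d, if φ d = q then f.1 d else 0, pf_mem φ f hφ⟩,
    Continuous.subtype_mk (pf_cont φ) _⟩

noncomputable def homOf (hφ : Monotone φ) (hψ : Monotone ψ) (hle : ∀ d, φ d ≤ ψ d) :
    (pf φ hφ).Homotopy (pf ψ hψ) where
  toFun z := ⟨Hfun φ ψ (z.1 : ℝ) z.2.1,
    Hfun_mem φ ψ hφ hψ hle (z.1 : ℝ) z.1.2.1 z.1.2.2 z.2⟩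
  continuous_toFun := by
    apply Continuous.subtype_mk
    apply continuous_pi
    intro q
    have hf : ∀ d : X, Continuous fun z : unitInterval × orderComplexRealization X =>
        (z.2.1 : X → ℝ) d := fun d =>
      (continuous_apply d).comp (continuous_subtype_val.comp continuous_snd)
    have ht : Continuous fun z : unitInterval × orderComplexRealization X => (z.1 : ℝ) :=
      continuous_subtype_val.comp continuous_fst
    have hcum : ∀ d : X, Continuous fun z : unitInterval × orderComplexRealization X =>
        cum z.2.1 d := fun d => continuous_finset_sum _ fun d' _ => hf d'
    have hA : ∀ d : X, Continuous fun z : unitInterval × orderComplexRealization X =>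
        Acoef (z.1 : ℝ) z.2.1 d := by
      intro d
      exact ((hcum d).min (continuous_const.sub ht)).sub
        (((hcum d).sub (hf d)).min (continuous_const.sub ht))
    apply continuous_finset_sum
    intro d _
    apply Continuous.add
    · by_cases h : φ d = q
      · simpa [h] using hA d
      · simp [h]; exact continuous_const
    · by_cases h : ψ d = q
      · simpa [h] using (show Continuous fun z : unitInterval × orderComplexRealization X =>
          z.2.1 d - Acoef (z.1 : ℝ) z.2.1 d from (hf d).sub (hA d))
      · simp [h]; exact continuous_const
  map_zero_left f := by
    apply Subtype.ext
    show Hfun φ ψ ((0 : unitInterval) : ℝ) f.1 = _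
    rw [show ((0 : unitInterval) : ℝ) = 0 from rfl, Hfun_zero φ ψ f]
    rfl
  map_one_left f := by
    apply Subtype.ext
    show Hfun φ ψ ((1 : unitInterval) : ℝ) f.1 = _
    rw [show ((1 : unitInterval) : ℝ) = 1 from rfl, Hfun_one φ ψ f]
    rfl

noncomputable def delta (m : X) : orderComplexRealization X :=
  ⟨fun q => if q = m then 1 else 0, fun q => by simp only []; split <;> norm_num, Set.toFinite _, by
    apply Set.Subsingleton.isChain
    intro a ha b hb
    simp only [Function.mem_support, ne_eq, ite_eq_right_iff, Classical.not_imp] at ha hb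
    rw [ha.1, hb.1], by
    rw [finsum_eq_sum_of_fintype]
    simp⟩

lemma contractible_of_max (r : X → X) (hr : Monotone r) (hrle : ∀ d, r d ≤ d)
    (m : X) (hm : ∀ d, r d ≤ m) :
    ContractibleSpace (orderComplexRealization X) := by
  have hid : Monotone (id : X → X) := monotone_id
  have hc : Monotone (fun _ : X => m) := monotone_const
  have h1 : (pf r hr).Homotopy (pf id hid) := homOf r id hr hid hrle
  have h2 : (pf r hr).Homotopy (pf (fun _ => m) hc) := homOf r _ hr hc hm
  have hpfid : pf (id : X → X) hid = ContinuousMap.id _ := by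
    apply ContinuousMap.ext
    intro f
    apply Subtype.ext
    funext q
    show ∑ d, (if d = q then f.1 d else 0) = f.1 q
    rw [Finset.sum_ite_eq']
    simp
  -- the constant map
  have hpfconst : ∀ f g : orderComplexRealization X,
      pf (fun _ : X => m) hc f = pf (fun _ : X => m) hc g := by
    intro f g
    obtain ⟨-, -, -, hfs⟩ := f.2
    obtain ⟨-, -, -, hgs⟩ := g.2
    apply Subtype.ext
    funext q
    show ∑ d, (if m = q then f.1 d else 0) = ∑ d, (if m = q then g.1 d else 0)
    split
    · rw [← finsum_eq_sum_of_fintype, ← finsum_eq_sum_of_fintype, hfs, hgs]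
    · rfl
  rw [contractible_iff_id_nullhomotopic]
  refine ⟨pf (fun _ => m) hc (delta m), ?_⟩
  have H : (pf (id : X → X) hid).Homotopy (pf (fun _ => m) hc) := h1.symm.trans h2
  rw [hpfid] at H
  have hconst : pf (fun _ : X => m) hc =
      ContinuousMap.const _ (pf (fun _ => m) hc (delta m)) :=
    ContinuousMap.ext fun f => hpfconst f (delta m)
  rw [hconst] at H
  exact ⟨H⟩

end main

end OCH

theorem stmt_10 {P : Type*} [PartialOrder P] [Fintype P] (C : P → P)
    (hanti : ∀ x y : P, x ≤ y → C y ≤ C x)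
    (hweak : ∀ x : P, x ≤ C (C x)) (p : P) :
    -- D is the fiber over (p, 0̂), E the image of the retraction (x,y) ↦ (p,y)
    (∃ r : {q : P × P // p ≤ q.1 ∧ q.1 ≤ C q.2 ∧ q.2 ≤ C q.1} →
           {q : P × P // p ≤ q.1 ∧ q.1 ≤ C q.2 ∧ q.2 ≤ C q.1},
       Monotone r ∧ (∀ d, r d ≤ d) ∧
       (∀ d, ((r d : P × P) ∈ {q : P × P | q.1 = p ∧ q.2 ≤ C p ∧ p ≤ C q.2})) ∧
       (∀ q ∈ {q : P × P | q.1 = p ∧ q.2 ≤ C p ∧ p ≤ C q.2}, ∃ d, (r d : P × P) = q)) ∧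
    IsGreatest {q : P × P | q.1 = p ∧ q.2 ≤ C p ∧ p ≤ C q.2} (p, C p) ∧
    ContractibleSpace (orderComplexRealization
      {q : P × P // p ≤ q.1 ∧ q.1 ≤ C q.2 ∧ q.2 ≤ C q.1}) := by
  classical
  set r : {q : P × P // p ≤ q.1 ∧ q.1 ≤ C q.2 ∧ q.2 ≤ C q.1} →
      {q : P × P // p ≤ q.1 ∧ q.1 ≤ C q.2 ∧ q.2 ≤ C q.1} :=
    fun d => ⟨(p, d.1.2), le_rfl, d.2.1.trans d.2.2.1,
      d.2.2.2.trans (hanti p d.1.1 d.2.1)⟩ with hr_def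
  have hrmono : Monotone r := by
    intro d d' h
    exact ⟨le_rfl, h.2⟩
  have hrle : ∀ d, r d ≤ d := fun d => ⟨d.2.1, le_rfl⟩
  refine ⟨⟨r, hrmono, hrle, ?_, ?_⟩, ⟨⟨rfl, le_rfl, hweak p⟩, fun q hq => ⟨le_of_eq hq.1, hq.2.1⟩⟩, ?_⟩
  · intro d
    exact ⟨rfl, d.2.2.2.trans (hanti p d.1.1 d.2.1), d.2.1.trans d.2.2.1⟩
  · intro q hq
    refine ⟨⟨(p, q.2), le_rfl, hq.2.2, hq.2.1⟩, ?_⟩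
    exact Prod.ext hq.1.symm rfl
  · haveI : Fintype {q : P × P // p ≤ q.1 ∧ q.1 ≤ C q.2 ∧ q.2 ≤ C q.1} :=
      Fintype.ofFinite _
    exact OCH.contractible_of_max r hrmono hrle
      ⟨(p, C p), le_rfl, hweak p, le_rfl⟩
      (fun d => ⟨le_rfl, d.2.2.2.trans (hanti p d.1.1 d.2.1)⟩)
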